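/- arXiv:2212.11358 — 2 statements merged into one kernel-verified Lean document; each statement's English description precedes it below -/
import Mathlib

section
/- Consider the one-step Lax–Friedrichs finite volume update $\overline{u}_m^{\,n+1} = \overline{u}_m^{\,n} - \frac{\Delta t}{|S_m|} \sum_{p \in \mathcal{V}_m} l_{mp}\, \mathcal{F}(\overline{u}_m^{\,n}, \overline{u}_p^{\,n}, \mathbf{n}_{mp})$ with numerical flux $\mathcal{F}(u,v,\mathbf{n}) = \frac{1}{2}(\mathbf{F}(u) + \mathbf{F}(v)) \cdot \mathbf{n} - \frac{\gamma}{2}(v - u)$, where $\gamma \geq \sup_w \|\mathbf{F}'(w)\|_2$ and $\mathbf{F} : \mathbb{R} \to \mathbb{R}^2$ is continuously differentiable. If the CFL condition $\gamma\, \Delta t \, \big(\sum_{p \in \mathcal{V}_m} l_{mp}\big) \leq |S_m|$ holds for each $m$, and the outward face normals satisfy $\sum_{p \in \mathcal{V}_m} l_{mp}\, \mathbf{n}_{mp} = \mathbf{0}$ (closed polygon condition), then $\overline{u}_m^{\,n+1}$ is a convex combination of $\overline{u}_m^{\,n}$ and its neighbors $\{\overline{u}_p^{\,n}\}$, and hence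 $\min_{p \in \mathcal{V}_m \cup \{m\}} \overline{u}_p^{\,n} \leq \overline{u}_m^{\,n+1} \leq \max_{p \in \mathcal{V}_m \cup \{m\}} \overline{u}_p^{\,n}$. -/
open scoped RealInnerProductSpace

/-- Under the CFL condition, one step of the first-order Lax–Friedrichs finite
volume scheme produces a value that is a convex combination of the previous
local values, hence satisfies a local discrete maximum principle. -/
theorem lax_friedrichs_convex_combination (K : ℕ)
    (F F' : ℝ → EuclideanSpace ℝ (Fin 2))
    (hF : ∀ w, HasDerivAt F (F' w) w)
    (γ : ℝ) (hγ : ∀ w, ‖F' w‖ ≤ γ)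
    (l : Fin K → ℝ) (hl : ∀ p, 0 < l p)
    (nrm : Fin K → EuclideanSpace ℝ (Fin 2)) (hn : ∀ p, ‖nrm p‖ = 1)
    (hclosed : (∑ p, l p • nrm p) = 0)
    (Sm Δt : ℝ) (hSm : 0 < Sm) (hΔt : 0 < Δt)
    (hCFL : γ * Δt * (∑ p, l p) ≤ Sm)
    (um : ℝ) (uN : Fin K → ℝ) (u' : ℝ)
    (hupd : u' = um - Δt / Sm * ∑ p, l p *
      ((1 / 2) * (inner ℝ (F um + F (uN p)) (nrm p) : ℝ) - γ / 2 * (uN p - um))) :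
    (∃ c : Option (Fin K) → ℝ, (∀ j, 0 ≤ c j) ∧ (∑ j, c j) = 1 ∧
        u' = c none * um + ∑ p, c (some p) * uN p) ∧
      (∀ Lb : ℝ, Lb ≤ um → (∀ p, Lb ≤ uN p) → Lb ≤ u') ∧
      (∀ Ub : ℝ, um ≤ Ub → (∀ p, uN p ≤ Ub) → u' ≤ Ub) := by
  have hγ0 : (0:ℝ) ≤ γ := le_trans (norm_nonneg _) (hγ 0)
  have hLip : ∀ u v : ℝ, ‖F v - F u‖ ≤ γ * |v - u| := by
    intro u v
    have := Convex.norm_image_sub_le_of_norm_hasDerivWithin_le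
      (f := F) (f' := F') (C := γ) (s := Set.univ)
      (fun x _ => (hF x).hasDerivWithinAt) (fun x _ => hγ x)
      convex_univ (Set.mem_univ u) (Set.mem_univ v)
    simpa [Real.norm_eq_abs] using this
  set d : Fin K → ℝ := fun p => ⟪F (uN p) - F um, nrm p⟫ with hd_def
  have hd : ∀ p, |d p| ≤ γ * |uN p - um| := by
    intro p
    calc |d p| ≤ ‖F (uN p) - F um‖ * ‖nrm p‖ := abs_real_inner_le_norm _ _
    _ = ‖F (uN p) - F um‖ := by rw [hn p, mul_one]
    _ ≤ γ * |uN p - um| := hLip um (uN p)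
  have hzero : ∑ p, l p * (⟪F um, nrm p⟫ : ℝ) = 0 := by
    have h1 : ∑ p, (⟪F um, l p • nrm p⟫ : ℝ) = ⟪F um, ∑ p, l p • nrm p⟫ :=
      (inner_sum _ _ _).symm
    simpa [inner_smul_right, hclosed] using h1
  -- rewrite update
  have hupd' : u' = um + ∑ p, (Δt / Sm * l p) * (γ/2*(uN p - um) - d p / 2) := by
    rw [hupd]
    have expand : ∀ p ∈ Finset.univ, l p * ((1/2) * (⟪F um + F (uN p), nrm p⟫ : ℝ) - γ/2*(uN p - um))
        = l p * (⟪F um, nrm p⟫ : ℝ) + l p * ((1/2)*d p - γ/2*(uN p - um)) := by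
      intro p _
      have h2 : (⟪F um + F (uN p), nrm p⟫ : ℝ) = 2*(⟪F um, nrm p⟫ : ℝ) + d p := by
        simp only [hd_def, inner_add_left, inner_sub_left]; ring
      rw [h2]; ring
    rw [Finset.sum_congr rfl expand, Finset.sum_add_distrib, hzero, zero_add]
    have h3 : Δt / Sm * ∑ p, l p * ((1/2)*d p - γ/2*(uN p - um))
        = - ∑ p, (Δt / Sm * l p) * (γ/2*(uN p - um) - d p / 2) := by
      rw [Finset.mul_sum, ← Finset.sum_neg_distrib]
      exact Finset.sum_congr rfl fun p _ => by ring
    rw [h3]; ring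
  have hfac : ∀ p : Fin K, 0 ≤ Δt / Sm * l p := fun p =>
    mul_nonneg (div_nonneg hΔt.le hSm.le) (hl p).le
  set cs : Fin K → ℝ := fun p => if uN p = um then 0
      else (Δt/Sm*l p)*(γ/2 - d p/(2*(uN p - um))) with hcs_def
  have hcs0 : ∀ p, 0 ≤ cs p := by
    intro p
    simp only [hcs_def]
    split
    · exact le_refl 0
    · rename_i hne
      have hΔ : uN p - um ≠ 0 := sub_ne_zero.mpr hne
      have habs : |d p / (uN p - um)| ≤ γ := by
        rw [abs_div, div_le_iff₀ (abs_pos.mpr hΔ)]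
        exact hd p
      have h4 := (abs_le.mp habs).2
      have h5 : γ/2 - d p/(2*(uN p - um)) ≥ 0 := by
        have : d p/(2*(uN p - um)) = (d p / (uN p - um)) / 2 := by rw [div_div, mul_comm]
        rw [this]; linarith
      exact mul_nonneg (hfac p) h5
  have hcsle : ∀ p, cs p ≤ Δt/Sm*l p*γ := by
    intro p
    simp only [hcs_def]
    split
    · exact mul_nonneg (hfac p) hγ0
    · rename_i hne
      have hΔ : uN p - um ≠ 0 := sub_ne_zero.mpr hne
      have habs : |d p / (uN p - um)| ≤ γ := by
        rw [abs_div, div_le_iff₀ (abs_pos.mpr hΔ)]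
        exact hd p
      have h4 := (abs_le.mp habs).1
      have h5 : γ/2 - d p/(2*(uN p - um)) ≤ γ := by
        have : d p/(2*(uN p - um)) = (d p / (uN p - um)) / 2 := by rw [div_div, mul_comm]
        rw [this]; linarith
      exact mul_le_mul_of_nonneg_left h5 (hfac p)
  have hsum : ∑ p, cs p ≤ 1 := by
    calc ∑ p, cs p ≤ ∑ p, Δt/Sm*l p*γ := Finset.sum_le_sum fun p _ => hcsle p
    _ = γ * Δt * (∑ p, l p) / Sm := by
        rw [Finset.mul_sum, Finset.sum_div]
        exact Finset.sum_congr rfl fun p _ => by ring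
    _ ≤ 1 := by rw [div_le_one hSm]; exact hCFL
  have hprod : ∀ p : Fin K, cs p * (uN p - um)
      = (Δt / Sm * l p) * (γ/2*(uN p - um) - d p / 2) := by
    intro p
    simp only [hcs_def]
    split
    · rename_i heq
      have : d p = 0 := by simp [hd_def, heq]
      rw [heq, this]; ring
    · rename_i hne
      have hΔ : uN p - um ≠ 0 := sub_ne_zero.mpr hne
      field_simp
  have hconv : u' = (1 - ∑ p, cs p) * um + ∑ p, cs p * uN p := by
    rw [hupd']
    have : ∑ p, (Δt / Sm * l p) * (γ/2*(uN p - um) - d p / 2)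
        = ∑ p, cs p * uN p - (∑ p, cs p) * um := by
      rw [← Finset.sum_congr rfl fun p _ => hprod p, Finset.sum_mul,
        ← Finset.sum_sub_distrib]
      exact Finset.sum_congr rfl fun p _ => by ring
    rw [this]; ring
  refine ⟨⟨fun j => j.elim (1 - ∑ p, cs p) cs, ?_, ?_, ?_⟩, ?_, ?_⟩
  · intro j
    cases j with
    | none => simpa using (by linarith : 0 ≤ 1 - ∑ p, cs p)
    | some p => simpa using hcs0 p
  · rw [Fintype.sum_option]; simp
  · simpa using hconv
  · intro Lb hLm hLp
    have h1 : (1 - ∑ p, cs p) * Lb ≤ (1 - ∑ p, cs p) * um :=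
      mul_le_mul_of_nonneg_left hLm (by linarith)
    have h2 : ∑ p, cs p * Lb ≤ ∑ p, cs p * uN p :=
      Finset.sum_le_sum fun p _ => mul_le_mul_of_nonneg_left (hLp p) (hcs0 p)
    have h3 : ∑ p, cs p * Lb = (∑ p, cs p) * Lb := by rw [Finset.sum_mul]
    rw [hconv]
    nlinarith [h1, h2, h3]
  · intro Ub hUm hUp
    have h1 : (1 - ∑ p, cs p) * um ≤ (1 - ∑ p, cs p) * Ub :=
      mul_le_mul_of_nonneg_left hUm (by linarith)
    have h2 : ∑ p, cs p * uN p ≤ ∑ p, cs p * Ub :=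
      Finset.sum_le_sum fun p _ => mul_le_mul_of_nonneg_left (hUp p) (hcs0 p)
    have h3 : ∑ p, cs p * Ub = (∑ p, cs p) * Ub := by rw [Finset.sum_mul]
    rw [hconv]
    nlinarith [h1, h2, h3]
end

section
/- For the one-dimensional case with $\omega = [0,1]$, $V = \mathbb{P}^k([0,1])$, and $S_m = [\frac{m-1}{k+1}, \frac{m}{k+1}]$ for $m = 1, \dots, k+1$ the uniform subdivision, the projection matrix $P$ with entries $P_{mp} = (k+1)\int_{S_m} x^{p-1}\,dx$ is invertible for every $k \geq 0$. -/
open Matrix Finset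

/-- Auxiliary: sum of binomial terms gives difference of consecutive powers. -/
lemma binom_diff (m p : ℕ) :
    ∑ j ∈ Finset.range (p + 1), (m : ℝ) ^ j * (Nat.choose (p + 1) j : ℝ)
      = ((m : ℝ) + 1) ^ (p + 1) - (m : ℝ) ^ (p + 1) := by
  have h := add_pow (m : ℝ) 1 (p + 1)
  simp only [one_pow, mul_one] at h
  rw [Finset.sum_range_succ, Nat.choose_self] at h
  push_cast at h
  linarith [h]

/-- In 1D, for the uniform subdivision of `[0,1]` into `k+1` subcells and the
monomial basis of `ℙᵏ`, the projection matrix of subcell mean values is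
invertible for every `k`. -/
theorem uniform_1d_projection_matrix_invertible (k : ℕ) :
    IsUnit (Matrix.of fun m p : Fin (k + 1) =>
      ((k : ℝ) + 1) *
        ∫ x in ((m : ℝ) / ((k : ℝ) + 1))..(((m : ℝ) + 1) / ((k : ℝ) + 1)),
          x ^ (p : ℕ)) := by
  have hk : ((k : ℝ) + 1) ≠ 0 := by positivity
  set V : Matrix (Fin (k + 1)) (Fin (k + 1)) ℝ :=
    Matrix.vandermonde (fun i : Fin (k + 1) => (i : ℝ)) with hV
  set T : Matrix (Fin (k + 1)) (Fin (k + 1)) ℝ :=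
    Matrix.of (fun j p : Fin (k + 1) =>
      if (j : ℕ) ≤ (p : ℕ) then (Nat.choose ((p : ℕ) + 1) (j : ℕ) : ℝ) else 0) with hT
  set D : Matrix (Fin (k + 1)) (Fin (k + 1)) ℝ :=
    Matrix.diagonal (fun p : Fin (k + 1) =>
      1 / ((((p : ℕ) : ℝ) + 1) * ((k : ℝ) + 1) ^ (p : ℕ))) with hD
  have key : (Matrix.of fun m p : Fin (k + 1) =>
      ((k : ℝ) + 1) *
        ∫ x in ((m : ℝ) / ((k : ℝ) + 1))..(((m : ℝ) + 1) / ((k : ℝ) + 1)),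
          x ^ (p : ℕ)) = V * T * D := by
    ext m p
    have hsum : ∑ j : Fin (k + 1), (m : ℝ) ^ (j : ℕ) * T j p
        = ((m : ℝ) + 1) ^ ((p : ℕ) + 1) - (m : ℝ) ^ ((p : ℕ) + 1) := by
      have h1 : ∑ j : Fin (k + 1), (m : ℝ) ^ (j : ℕ) * T j p
          = ∑ j ∈ Finset.range (k + 1), (m : ℝ) ^ j *
              (if j ≤ (p : ℕ) then (Nat.choose ((p : ℕ) + 1) j : ℝ) else 0) := by
        rw [← Fin.sum_univ_eq_sum_range]
        rfl
      rw [h1]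
      rw [← Finset.sum_subset (Finset.range_subset_range.2 (Nat.succ_le_succ p.is_le))
        (fun x _ hx => by
          rw [Finset.mem_range, not_lt] at hx
          rw [if_neg (by omega), mul_zero])]
      rw [← binom_diff m p]
      refine Finset.sum_congr rfl fun j hj => ?_
      rw [Finset.mem_range] at hj
      rw [if_pos (by omega)]
    rw [Matrix.of_apply, hD, Matrix.mul_diagonal, Matrix.mul_apply]
    have hVj : ∀ j : Fin (k + 1), V m j = (m : ℝ) ^ (j : ℕ) := fun j => rfl
    simp only [hVj]
    rw [hsum]
    rw [integral_pow]
    rw [div_pow, div_pow]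
    have hkp : ((k : ℝ) + 1) ^ ((p : ℕ) + 1) ≠ 0 := pow_ne_zero _ hk
    have hp1 : ((p : ℕ) : ℝ) + 1 ≠ 0 := by positivity
    field_simp
    ring
  rw [key]
  have hVdet : V.det ≠ 0 := by
    rw [hV, Matrix.det_vandermonde_ne_zero_iff]
    intro a b hab
    exact Fin.ext (Nat.cast_injective hab)
  have hTtri : T.BlockTriangular id := by
    intro j p hjp
    simp only [id] at hjp
    exact if_neg (by omega)
  have hTdet : T.det ≠ 0 := by
    rw [Matrix.det_of_upperTriangular hTtri]
    refine Finset.prod_ne_zero_iff.2 fun i _ => ?_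
    simp only [hT, Matrix.of_apply, if_pos (le_refl (i : ℕ))]
    rw [Nat.choose_succ_self_right]
    positivity
  have hDdet : D.det ≠ 0 := by
    rw [hD, Matrix.det_diagonal]
    refine Finset.prod_ne_zero_iff.2 fun i _ => ?_
    positivity
  rw [Matrix.isUnit_iff_isUnit_det]
  simp only [Matrix.det_mul]
  exact (isUnit_iff_ne_zero).2 (by positivity)
end
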